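/- Every central hyperplane in ℝ^3 (through the center of the cube [0,1]^3) that contains no vertex of the 3-cube slices at most 6 edges of the 3-cube, and any hyperplane containing no vertex slices at most 6 edges; consequently any arrangement of 4 hyperplanes slicing every edge of the 3-cube an even nonzero number of times must slice each of the 12 edges exactly twice. -/
import Mathlib


open Finset

noncomputable def val3 (a : Fin 3 → ℝ) (v : Fin 3 → Bool) : ℝ :=
  ∑ j, a j * (if v j then (1:ℝ) else 0)

lemma val_update (a : Fin 3 → ℝ) (v : Fin 3 → Bool) (j : Fin 3) (h : v j = false) :
    val3 a (Function.update v j true) = val3 a v + a j := by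
  unfold val3
  have key : ∀ k, a k * (if Function.update v j true k then (1:ℝ) else 0)
      = a k * (if v k then (1:ℝ) else 0) + (if k = j then a j else 0) := by
    intro k
    by_cases hk : k = j
    · subst hk; simp [Function.update, h]
    · simp [Function.update, hk]
  rw [Finset.sum_congr rfl fun k _ => key k, Finset.sum_add_distrib,
    Finset.sum_ite_eq' Finset.univ j (fun _ => a j)]
  simp

lemma exists_t_iff (A B b : ℝ) (hA : A ≠ b) (hB : B ≠ b) :
    (∃ t : ℝ, t ∈ Set.Ioo (0:ℝ) 1 ∧ (1-t)*A + t*B = b) ↔ ((A < b) ↔ ¬(B < b)) := by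
  constructor
  · rintro ⟨t, ⟨ht0, ht1⟩, heq⟩
    constructor
    · intro hAb hBb
      nlinarith
    · intro hnB
      by_contra hnA
      have hBgt : b < B := lt_of_le_of_ne (not_lt.1 hnB) (Ne.symm hB)
      have hAgt : b < A := lt_of_le_of_ne (not_lt.1 hnA) (Ne.symm hA)
      nlinarith
  · intro h
    rcases lt_or_gt_of_ne hA with hA' | hA'
    · have hB' : b < B := lt_of_le_of_ne (not_lt.1 (h.mp hA')) (Ne.symm hB)
      have hne : B - A ≠ 0 := by linarith
      refine ⟨(b - A)/(B - A), ⟨div_pos (by linarith) (by linarith), ?_⟩, ?_⟩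
      · rw [div_lt_one (by linarith)]; linarith
      · field_simp; ring
    · have hB' : B < b := by
        by_contra hc
        exact absurd hA' (not_lt.2 (le_of_lt (h.mpr (by simpa using hc))))
      have hne : A - B ≠ 0 := by linarith
      refine ⟨(A - b)/(A - B), ⟨div_pos (by linarith) (by linarith), ?_⟩, ?_⟩
      · rw [div_lt_one (by linarith)]; linarith
      · field_simp; ring

def idx (v : Fin 3 → Bool) : Fin 8 :=
  ⟨(if v 0 then 1 else 0) + (if v 1 then 2 else 0) + (if v 2 then 4 else 0), by
    cases v 0 <;> cases v 1 <;> cases v 2 <;> simp⟩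

def vtx (i : Fin 8) : Fin 3 → Bool := fun j => decide ((i.val >>> j.val) % 2 = 1)

lemma vtx_idx : ∀ v, vtx (idx v) = v := by decide

set_option maxRecDepth 10000 in
lemma comb : ∀ t : Fin 8 → Bool,
    (∀ v : Fin 3 → Bool, ∀ p q : Fin 3, p ≠ q → v p = false → v q = false →
      ¬ (t (idx v) = t (idx (Function.update (Function.update v p true) q true)) ∧
         t (idx (Function.update v p true)) ≠ t (idx v) ∧
         t (idx (Function.update v q true)) ≠ t (idx v))) →
    (Finset.univ.filter (fun e : (Fin 3 → Bool) × Fin 3 =>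
      e.1 e.2 = false ∧ t (idx e.1) ≠ t (idx (Function.update e.1 e.2 true)))).card ≤ 6 := by
  decide


/-- The hyperplane `{x | ∑ j, a j * x j = b}` slices the edge of the unit cube between
adjacent vertices `u, w`: it meets the relative interior of the edge and contains no
vertex of the cube. -/
def SlicesEdge (n : ℕ) (a : Fin n → ℝ) (b : ℝ) (u w : Fin n → Bool) : Prop :=
  (∀ z : Fin n → Bool, ∑ j, a j * (if z j then (1 : ℝ) else 0) ≠ b) ∧
  ∃ t : ℝ, t ∈ Set.Ioo (0 : ℝ) 1 ∧
    ∑ j, a j * ((1 - t) * (if u j then (1 : ℝ) else 0) + t * (if w j then (1 : ℝ) else 0)) = b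

lemma slice_bound (a : Fin 3 → ℝ) (b : ℝ) :
    {e : (Fin 3 → Bool) × Fin 3 | e.1 e.2 = false ∧
      SlicesEdge 3 a b e.1 (Function.update e.1 e.2 true)}.ncard ≤ 6 := by
  classical
  by_cases hv : ∀ z : Fin 3 → Bool, val3 a z ≠ b
  · -- no vertex on the hyperplane
    set s : (Fin 3 → Bool) → Bool := fun v => decide (val3 a v < b) with hs
    have hsum : ∀ (t : ℝ) (u w : Fin 3 → Bool),
        ∑ j, a j * ((1 - t) * (if u j then (1:ℝ) else 0) + t * (if w j then (1:ℝ) else 0))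
          = (1 - t) * val3 a u + t * val3 a w := by
      intro t u w
      unfold val3
      rw [Finset.mul_sum, Finset.mul_sum, ← Finset.sum_add_distrib]
      exact Finset.sum_congr rfl fun k _ => by ring
    have hkey : ∀ (u : Fin 3 → Bool) (j : Fin 3), u j = false →
        (SlicesEdge 3 a b u (Function.update u j true) ↔
          s u ≠ s (Function.update u j true)) := by
      intro u j hj
      unfold SlicesEdge
      constructor
      · rintro ⟨-, t, ht, heq⟩
        rw [hsum] at heq
        have := (exists_t_iff (val3 a u) (val3 a (Function.update u j true)) b (hv u)
          (hv _)).mp ⟨t, ht, heq⟩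
        simp only [hs, Ne, decide_eq_decide]
        tauto
      · intro hne
        refine ⟨hv, ?_⟩
        simp only [hs, Ne, decide_eq_decide] at hne
        obtain ⟨t, ht, heq⟩ := (exists_t_iff (val3 a u) (val3 a (Function.update u j true)) b
          (hv u) (hv _)).mpr (by tauto)
        exact ⟨t, ht, by rw [hsum]; exact heq⟩
    -- geometric exclusion of alternating faces
    have hok : ∀ v : Fin 3 → Bool, ∀ p q : Fin 3, p ≠ q → v p = false → v q = false →
        ¬ ((s ∘ vtx) (idx v) = (s ∘ vtx) (idx (Function.update (Function.update v p true) q true)) ∧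
           (s ∘ vtx) (idx (Function.update v p true)) ≠ (s ∘ vtx) (idx v) ∧
           (s ∘ vtx) (idx (Function.update v q true)) ≠ (s ∘ vtx) (idx v)) := by
      intro v p q hpq hvp hvq
      simp only [Function.comp_apply, vtx_idx]
      rintro ⟨h1, h2, h3⟩
      have hup : val3 a (Function.update v p true) = val3 a v + a p := val_update a v p hvp
      have huq : val3 a (Function.update v q true) = val3 a v + a q := val_update a v q hvq
      have hq' : Function.update v p true q = false := by
        rw [Function.update_of_ne (Ne.symm hpq) _ _]; exact hvq
      have hupq : val3 a (Function.update (Function.update v p true) q true)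
          = val3 a v + a p + a q := by
        rw [val_update a _ q hq', hup]
      simp only [hs, Ne, decide_eq_decide] at h1 h2 h3
      rw [hup] at h2; rw [huq] at h3; rw [hupq] at h1
      have hvp' := hv (Function.update v p true); rw [hup] at hvp'
      have hvq' := hv (Function.update v q true); rw [huq] at hvq'
      rcases lt_or_gt_of_ne (hv v) with hlt | hgt
      · have h1' : val3 a v + a p + a q < b := h1.mp hlt
        have h2' : b < val3 a v + a p := by
          rcases lt_or_gt_of_ne hvp' with h | h
          · exact absurd ⟨fun _ => hlt, fun _ => h⟩ h2
          · exact h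
        have h3' : b < val3 a v + a q := by
          rcases lt_or_gt_of_ne hvq' with h | h
          · exact absurd ⟨fun _ => hlt, fun _ => h⟩ h3
          · exact h
        linarith
      · have h1' : b < val3 a v + a p + a q := by
          rcases lt_or_gt_of_ne (hv (Function.update (Function.update v p true) q true)) with h | h
          · rw [hupq] at h; exact absurd (h1.mpr h) (not_lt.2 (le_of_lt hgt))
          · rwa [hupq] at h
        have h2' : val3 a v + a p < b := by
          rcases lt_or_gt_of_ne hvp' with h | h
          · exact h
          · exact absurd ⟨fun hc => absurd hc (not_lt.2 (le_of_lt h)),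
              fun hc => absurd hc (not_lt.2 (le_of_lt hgt))⟩ h2
        have h3' : val3 a v + a q < b := by
          rcases lt_or_gt_of_ne hvq' with h | h
          · exact h
          · exact absurd ⟨fun hc => absurd hc (not_lt.2 (le_of_lt h)),
              fun hc => absurd hc (not_lt.2 (le_of_lt hgt))⟩ h3
        linarith
    have hcard := comb (s ∘ vtx) hok
    simp only [Function.comp_apply, vtx_idx] at hcard
    have hset : {e : (Fin 3 → Bool) × Fin 3 | e.1 e.2 = false ∧
        SlicesEdge 3 a b e.1 (Function.update e.1 e.2 true)}
        = ↑(Finset.univ.filter (fun e : (Fin 3 → Bool) × Fin 3 =>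
            e.1 e.2 = false ∧ s e.1 ≠ s (Function.update e.1 e.2 true))) := by
      ext e
      simp only [Set.mem_setOf_eq, Finset.coe_filter, Finset.mem_univ, true_and]
      constructor
      · rintro ⟨h1, h2⟩; exact ⟨h1, (hkey e.1 e.2 h1).mp h2⟩
      · rintro ⟨h1, h2⟩; exact ⟨h1, (hkey e.1 e.2 h1).mpr h2⟩
    rw [hset, Set.ncard_coe_finset]
    exact hcard
  · -- some vertex lies on the hyperplane: no edge is sliced
    have hempty : {e : (Fin 3 → Bool) × Fin 3 | e.1 e.2 = false ∧
        SlicesEdge 3 a b e.1 (Function.update e.1 e.2 true)} = ∅ := by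
      ext e
      simp only [Set.mem_setOf_eq, Set.mem_empty_iff_false, iff_false, not_and]
      rintro - ⟨h1, -⟩
      exact hv h1
    rw [hempty]
    simp

/-- Every central hyperplane of the `3`-cube containing no vertex slices at most `6` of its
`12` edges, in fact every hyperplane containing no vertex does; consequently any arrangement
of `4` hyperplanes slicing every edge an even nonzero number of times slices each edge
exactly twice.  Edges are encoded as pairs `(u, j)` with `u j = false`, the edge joining
`u` and `Function.update u j true`. -/
theorem cube3_cut_bound_and_double_slicing :
    (∀ (a : Fin 3 → ℝ) (b : ℝ), a ≠ 0 → (∑ j, a j * (1 / 2 : ℝ)) = b →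
      {e : (Fin 3 → Bool) × Fin 3 | e.1 e.2 = false ∧
        SlicesEdge 3 a b e.1 (Function.update e.1 e.2 true)}.ncard ≤ 6) ∧
    (∀ (a : Fin 3 → ℝ) (b : ℝ), a ≠ 0 →
      {e : (Fin 3 → Bool) × Fin 3 | e.1 e.2 = false ∧
        SlicesEdge 3 a b e.1 (Function.update e.1 e.2 true)}.ncard ≤ 6) ∧
    (∀ (a : Fin 4 → Fin 3 → ℝ) (b : Fin 4 → ℝ), (∀ i, a i ≠ 0) →
      (∀ (u : Fin 3 → Bool) (j : Fin 3), u j = false →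
        Even {i : Fin 4 | SlicesEdge 3 (a i) (b i) u (Function.update u j true)}.ncard ∧
        {i : Fin 4 | SlicesEdge 3 (a i) (b i) u (Function.update u j true)}.ncard ≠ 0) →
      ∀ (u : Fin 3 → Bool) (j : Fin 3), u j = false →
        {i : Fin 4 | SlicesEdge 3 (a i) (b i) u (Function.update u j true)}.ncard = 2) := by
  refine ⟨fun a b _ _ => slice_bound a b, fun a b _ => slice_bound a b, ?_⟩
  intro a b _ hcond u j hj
  classical
  -- N e : number of hyperplanes slicing edge e
  set N : ((Fin 3 → Bool) × Fin 3) → ℕ := fun e =>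
    (Finset.univ.filter fun i : Fin 4 =>
      SlicesEdge 3 (a i) (b i) e.1 (Function.update e.1 e.2 true)).card with hN
  have hncard : ∀ (u : Fin 3 → Bool) (j : Fin 3),
      {i : Fin 4 | SlicesEdge 3 (a i) (b i) u (Function.update u j true)}.ncard = N (u, j) := by
    intro u j
    have : {i : Fin 4 | SlicesEdge 3 (a i) (b i) u (Function.update u j true)}
        = ↑(Finset.univ.filter fun i : Fin 4 =>
            SlicesEdge 3 (a i) (b i) u (Function.update u j true)) := by
      ext i; simp
    rw [this, Set.ncard_coe_finset]
  set E : Finset ((Fin 3 → Bool) × Fin 3) :=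
    Finset.univ.filter (fun e => e.1 e.2 = false) with hE
  have hEcard : E.card = 12 := by decide
  have hN4 : ∀ e, N e ≤ 4 := by
    intro e
    calc N e ≤ (Finset.univ : Finset (Fin 4)).card := Finset.card_filter_le _ _
    _ = 4 := by simp
  have hN2 : ∀ e ∈ E, 2 ≤ N e := by
    rintro ⟨u', j'⟩ he
    rw [hE, Finset.mem_filter] at he
    obtain ⟨heven, hne⟩ := hcond u' j' he.2
    rw [hncard] at heven hne
    obtain ⟨k, hk⟩ := heven
    omega
  have h6 : ∀ i : Fin 4, (E.filter fun e =>
      SlicesEdge 3 (a i) (b i) e.1 (Function.update e.1 e.2 true)).card ≤ 6 := by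
    intro i
    have h := slice_bound (a i) (b i)
    have hcoe : ((E.filter fun e =>
        SlicesEdge 3 (a i) (b i) e.1 (Function.update e.1 e.2 true)) : Set _)
        = {e : (Fin 3 → Bool) × Fin 3 | e.1 e.2 = false ∧
            SlicesEdge 3 (a i) (b i) e.1 (Function.update e.1 e.2 true)} := by
      ext e
      simp [hE, Finset.mem_filter, and_assoc]
    rw [← hcoe, Set.ncard_coe_finset] at h
    exact h
  have hswap : ∑ e ∈ E, N e = ∑ i : Fin 4, (E.filter fun e =>
      SlicesEdge 3 (a i) (b i) e.1 (Function.update e.1 e.2 true)).card := by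
    simp only [hN, Finset.card_filter]
    rw [Finset.sum_comm]
  have hsum_le : ∑ e ∈ E, N e ≤ 24 := by
    rw [hswap]
    have h1 : ∑ i : Fin 4, (E.filter fun e =>
        SlicesEdge 3 (a i) (b i) e.1 (Function.update e.1 e.2 true)).card
        ≤ ∑ _i : Fin 4, 6 := Finset.sum_le_sum fun i _ => h6 i
    simpa using h1
  -- conclude for the edge (u, j)
  rw [hncard]
  have heuj : (u, j) ∈ E := by simp [hE, hj]
  by_contra hne2
  have h4 : N (u, j) = 4 := by
    obtain ⟨heven, hne⟩ := hcond u j hj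
    rw [hncard] at heven hne
    obtain ⟨k, hk⟩ := heven
    have := hN4 (u, j)
    omega
  have hrest : 22 ≤ ∑ e ∈ E.erase (u, j), N e := by
    have h1 : ∑ _e ∈ E.erase (u, j), 2 ≤ ∑ e ∈ E.erase (u, j), N e :=
      Finset.sum_le_sum fun e he => hN2 e (Finset.mem_of_mem_erase he)
    have h2 : (E.erase (u, j)).card = 11 := by
      rw [Finset.card_erase_of_mem heuj, hEcard]
    simpa [Finset.sum_const, h2] using h1
  have htot := Finset.add_sum_erase E N heuj
  omega
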